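/- For the K₁ closure with normalized flux function F(ū₁) = (2/3)ū₁² + 1/3 (the closed second moment as a function of the first normalized moment), the eigenvalues of the Jacobian of the flux (u₀, u₁) ↦ (u₁, u₀·F(u₁/u₀)) are bounded in absolute value by 1 for all realizable (u₀, u₁) with u₀ > 0 and |u₁/u₀| ≤ 1. -/
import Mathlib


theorem stmt18 (u0 u1 : ℝ) (h0 : 0 < u0) (h1 : |u1 / u0| ≤ 1) :
    let r : ℝ := u1 / u0
    let J : Matrix (Fin 2) (Fin 2) ℝ :=
      !![0, 1; 1 / 3 - (2 / 3) * r ^ 2, (4 / 3) * r]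
    ∀ lam : ℝ, (J - lam • (1 : Matrix (Fin 2) (Fin 2) ℝ)).det = 0 → |lam| ≤ 1 := by
  intro r J lam hdet
  have hd : (0 - lam) * ((4 / 3) * r - lam) - 1 * (1 / 3 - (2 / 3) * r ^ 2) = 0 := by
    simpa [J, Matrix.det_fin_two, Matrix.smul_apply, Matrix.one_apply] using hdet
  rw [abs_le]
  constructor <;> nlinarith [sq_nonneg (r - lam), sq_nonneg (lam - 1), sq_nonneg (lam + 1)]
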